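/- Let n ≥ 3 and let T be the n × n tridiagonal 0–1 Toeplitz matrix with T_{i,j} = 1 if |i − j| = 1 and T_{i,j} = 0 otherwise. For σ ∈ S_n define: k(σ) = the length of the cycle of σ containing 1 (with k(σ) = 1 if 1 is a fixed point); ℓ(σ) = the total number of cycles of σ, counting fixed points as cycles of length 1; N(σ) = the number of permutations in S_n having the same cycle type as σ; and c_σ = (−1)^{n − ℓ(σ)} · N(σ) if k(σ) = 1, c_σ = (−1)^{n − 1 − ℓ(σ)} · N(σ) if k(σ) = 2, and c_σ = 0 if k(σ) > 2. Then Σ_{σ ∈ S_n} c_σ · ∏_{i=1}^n T_{i,σ(i)} = −(−1/2)^{n/2} · n!/(n/2)! if n is even, and Σ_{σ ∈ S_n} c_σ · ∏_{i=1}^n T_{i,σ(i)} = 0 if n is odd, the sum being taken in ℚ. -/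

import Mathlib

set_option maxHeartbeats 1000000

open Equiv Finset

open Classical in
noncomputable def fpf (α : Type) [Fintype α] : Finset (Equiv.Perm α) :=
  Finset.univ.filter (fun σ => σ * σ = 1 ∧ ∀ x, σ x ≠ x)

open Classical in
lemma mem_fpf {α : Type} [Fintype α] {σ : Equiv.Perm α} :
    σ ∈ fpf α ↔ σ * σ = 1 ∧ ∀ x, σ x ≠ x := by
  simp [fpf]

lemma fpf_card (k : ℕ) : ∀ (α : Type) [Fintype α] [DecidableEq α],
    Fintype.card α = 2 * k → (fpf α).card * (2 ^ k * k.factorial) = (2 * k).factorial := by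
  induction k with
  | zero =>
    intro α _ _ h
    have he : IsEmpty α := Fintype.card_eq_zero_iff.mp (by simpa using h)
    have : fpf α = Finset.univ := by
      ext σ
      simp only [Finset.mem_univ, iff_true, mem_fpf]
      exact ⟨Subsingleton.elim _ _, fun x => (he.false x).elim⟩
    rw [this]
    simp [Finset.card_univ, Fintype.card_perm, h]
  | succ k ih =>
    intro α _ _ h
    classical
    have hpos : 0 < Fintype.card α := by omega
    obtain ⟨a⟩ := Fintype.card_pos_iff.mp hpos
    -- decompose by the image of a
    have hmaps : ∀ σ ∈ fpf α, σ a ∈ Finset.univ.erase a := by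
      intro σ hσ
      exact Finset.mem_erase.mpr ⟨(mem_fpf.mp hσ).2 a, Finset.mem_univ _⟩
    have hsum := Finset.card_eq_sum_card_fiberwise hmaps
    have hfiber : ∀ b ∈ Finset.univ.erase a,
        ((fpf α).filter (fun σ => σ a = b)).card * (2 ^ k * k.factorial)
          = (2 * k).factorial := by
      intro b hb
      have hba : b ≠ a := (Finset.mem_erase.mp hb).1
      set β := {x : α // x ≠ a ∧ x ≠ b} with hβ
      have hcardβ : Fintype.card β = 2 * k := by
        have : Fintype.card β = Fintype.card α - 2 := by
          rw [Fintype.card_subtype]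
          have : Finset.univ.filter (fun x : α => x ≠ a ∧ x ≠ b)
              = Finset.univ \ {a, b} := by
            ext x; simp [and_comm]
          rw [this, Finset.card_sdiff_of_subset (by simp)]
          simp [Finset.card_insert_of_notMem, hba.symm]
        omega
      have key : ((fpf α).filter (fun σ => σ a = b)).card = (fpf β).card := by
        refine Finset.card_bij'
          (fun σ hσ => σ.subtypePerm (p := fun x => x ≠ a ∧ x ≠ b) ?_)
          (fun τ _ => Equiv.swap a b * Equiv.Perm.ofSubtype τ) ?_ ?_ ?_ ?_
        · -- the subtypePerm condition
          obtain ⟨hσf, hσa⟩ := Finset.mem_filter.mp hσ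
          obtain ⟨hinv, _⟩ := mem_fpf.mp hσf
          have hσσ : ∀ x, σ (σ x) = x := fun x => by
            have := congrArg (fun τ : Equiv.Perm α => τ x) hinv
            simpa using this
          have hsb : σ b = a := by rw [← hσa, hσσ]
          have h1 : ∀ x, σ x = a ↔ x = b := fun x =>
            ⟨fun hc => by rw [← hσσ x, hc, hσa], fun hc => by rw [hc, hsb]⟩
          have h2 : ∀ x, σ x = b ↔ x = a := fun x =>
            ⟨fun hc => by rw [← hσσ x, hc, hsb], fun hc => by rw [hc, hσa]⟩
          intro x
          simp only [ne_eq, h1, h2]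
          exact and_comm
        · -- i maps into fpf β
          intro σ hσ
          obtain ⟨hσf, hσa⟩ := Finset.mem_filter.mp hσ
          obtain ⟨hinv, hfpf⟩ := mem_fpf.mp hσf
          have hσσ : ∀ x, σ (σ x) = x := fun x => by
            have := congrArg (fun τ : Equiv.Perm α => τ x) hinv
            simpa using this
          refine mem_fpf.mpr ⟨?_, ?_⟩
          · ext y
            simp only [Equiv.Perm.mul_apply, Equiv.Perm.subtypePerm_apply,
              Equiv.Perm.one_apply]
            exact hσσ (y : α)
          · intro y hy
            exact hfpf (y : α) (congrArg Subtype.val hy)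
        · -- j maps into the fiber
          intro τ hτ
          obtain ⟨hτinv, hτf⟩ := mem_fpf.mp hτ
          have hoa : Equiv.Perm.ofSubtype τ a = a :=
            Equiv.Perm.ofSubtype_apply_of_not_mem τ (by simp)
          have hob : Equiv.Perm.ofSubtype τ b = b :=
            Equiv.Perm.ofSubtype_apply_of_not_mem τ (by simp [hba])
          have happa : (Equiv.swap a b * Equiv.Perm.ofSubtype τ) a = b := by
            rw [Equiv.Perm.mul_apply, hoa, Equiv.swap_apply_left]
          have happb : (Equiv.swap a b * Equiv.Perm.ofSubtype τ) b = a := by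
            rw [Equiv.Perm.mul_apply, hob, Equiv.swap_apply_right]
          have happ : ∀ (x : α) (hx : x ≠ a ∧ x ≠ b),
              (Equiv.swap a b * Equiv.Perm.ofSubtype τ) x = ↑(τ ⟨x, hx⟩) := by
            intro x hx
            rw [Equiv.Perm.mul_apply, Equiv.Perm.ofSubtype_apply_of_mem τ hx,
              Equiv.swap_apply_of_ne_of_ne (τ ⟨x, hx⟩).2.1 (τ ⟨x, hx⟩).2.2]
          have hττ : ∀ y : β, τ (τ y) = y := fun y => by
            have := congrArg (fun g : Equiv.Perm β => g y) hτinv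
            simpa using this
          refine Finset.mem_filter.mpr ⟨mem_fpf.mpr ⟨?_, ?_⟩, happa⟩
          · ext x
            rw [Equiv.Perm.mul_apply, Equiv.Perm.one_apply]
            by_cases hxa : x = a
            · subst hxa; rw [happa, happb]
            by_cases hxb : x = b
            · subst hxb; rw [happb, happa]
            · have hx : x ≠ a ∧ x ≠ b := ⟨hxa, hxb⟩
              rw [happ x hx, happ _ (τ ⟨x, hx⟩).2, Subtype.coe_eta, hττ]
          · intro x
            by_cases hxa : x = a
            · subst hxa; rw [happa]; exact hba
            by_cases hxb : x = b
            · subst hxb; rw [happb]; exact Ne.symm hba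
            · have hx : x ≠ a ∧ x ≠ b := ⟨hxa, hxb⟩
              rw [happ x hx]
              intro hc
              exact hτf ⟨x, hx⟩ (Subtype.ext hc)
        · -- left inverse
          intro σ hσ
          obtain ⟨hσf, hσa⟩ := Finset.mem_filter.mp hσ
          obtain ⟨hinv, hfpf⟩ := mem_fpf.mp hσf
          have hσσ : ∀ x, σ (σ x) = x := fun x => by
            have := congrArg (fun τ : Equiv.Perm α => τ x) hinv
            simpa using this
          have hsb : σ b = a := by rw [← hσa, hσσ]
          have h1 : ∀ x, σ x = a ↔ x = b := fun x =>
            ⟨fun hc => by rw [← hσσ x, hc, hσa], fun hc => by rw [hc, hsb]⟩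
          have h2 : ∀ x, σ x = b ↔ x = a := fun x =>
            ⟨fun hc => by rw [← hσσ x, hc, hsb], fun hc => by rw [hc, hσa]⟩
          ext x
          rw [Equiv.Perm.mul_apply]
          by_cases hxa : x = a
          · subst hxa
            rw [Equiv.Perm.ofSubtype_apply_of_not_mem _ (by simp), Equiv.swap_apply_left, hσa]
          by_cases hxb : x = b
          · subst hxb
            rw [Equiv.Perm.ofSubtype_apply_of_not_mem _ (by simp [hba]),
              Equiv.swap_apply_right, hsb]
          · have hx : x ≠ a ∧ x ≠ b := ⟨hxa, hxb⟩
            rw [Equiv.Perm.ofSubtype_apply_of_mem (p := fun x => x ≠ a ∧ x ≠ b) _ hx]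
            simp only [Equiv.Perm.subtypePerm_apply]
            exact Equiv.swap_apply_of_ne_of_ne (fun hc => hxb ((h1 x).mp hc))
              (fun hc => hxa ((h2 x).mp hc))
        · -- right inverse
          intro τ hτ
          obtain ⟨hτinv, hτf⟩ := mem_fpf.mp hτ
          ext y
          simp only [Equiv.Perm.subtypePerm_apply]
          have hx : (y : α) ≠ a ∧ (y : α) ≠ b := y.2
          rw [Equiv.Perm.mul_apply, Equiv.Perm.ofSubtype_apply_of_mem τ hx,
            Equiv.swap_apply_of_ne_of_ne (τ ⟨y, hx⟩).2.1 (τ ⟨y, hx⟩).2.2,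
            Subtype.coe_eta]
      rw [key]
      exact ih β hcardβ
    rw [hsum, Finset.sum_mul]
    have hterm : ∀ b ∈ Finset.univ.erase a,
        ((fpf α).filter (fun σ => σ a = b)).card * (2 ^ (k + 1) * (k + 1).factorial)
          = (2 * k).factorial * (2 * (k + 1)) := by
      intro b hb
      have e : 2 ^ (k + 1) * (k + 1).factorial = 2 ^ k * k.factorial * (2 * (k + 1)) := by
        rw [pow_succ, Nat.factorial_succ]; ring
      rw [e, ← mul_assoc, hfiber b hb]
    rw [Finset.sum_congr rfl hterm, Finset.sum_const,
      Finset.card_erase_of_mem (Finset.mem_univ a), Finset.card_univ, h, smul_eq_mul]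
    have h1 : (2 * (k + 1)).factorial = 2 * (k + 1) * ((2 * k + 1) * (2 * k).factorial) := by
      have e : 2 * (k + 1) = (2 * k + 1) + 1 := by ring
      rw [e, Nat.factorial_succ, Nat.factorial_succ]
    have h2 : 2 * (k + 1) - 1 = 2 * k + 1 := by omega
    rw [h1, h2]
    ring

/-- The cycle type of a permutation including fixed points as cycles of length `1`:
Mathlib's `cycleType` (the lengths of the nontrivial cycles) together with one part `1`
for each fixed point. -/
noncomputable def fullCycleType {n : ℕ} (σ : Equiv.Perm (Fin n)) : Multiset ℕ :=
  σ.cycleType + Multiset.replicate (n - σ.cycleType.sum) 1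

open Classical in
/-- The number of permutations in `S_n` having the same cycle type
(fixed points included) as `σ`. -/
noncomputable def numSameCycleType {n : ℕ} (σ : Equiv.Perm (Fin n)) : ℕ :=
  (Finset.univ.filter
    (fun τ : Equiv.Perm (Fin n) => fullCycleType τ = fullCycleType σ)).card


lemma cycleType_eq_iff {n k : ℕ} (hn : n = 2 * k) (hk : 1 ≤ k) (τ : Equiv.Perm (Fin n)) :
    τ.cycleType = Multiset.replicate k 2 ↔ (τ * τ = 1 ∧ ∀ x, τ x ≠ x) := by
  constructor
  · intro hct
    have horder : orderOf τ ∣ 2 := by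
      rw [← Equiv.Perm.lcm_cycleType, hct]
      exact Multiset.lcm_dvd.mpr (fun x hx => by rw [Multiset.eq_of_mem_replicate hx])
    have hsq : τ * τ = 1 := by
      have := orderOf_dvd_iff_pow_eq_one.mp horder
      rwa [pow_two] at this
    refine ⟨hsq, ?_⟩
    have hsupp : τ.support = Finset.univ := by
      apply Finset.eq_univ_of_card
      have hs := Equiv.Perm.sum_cycleType τ
      rw [hct, Multiset.sum_replicate, smul_eq_mul] at hs
      rw [← hs, Fintype.card_fin]
      omega
    intro x
    rw [← Equiv.Perm.mem_support, hsupp]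
    exact Finset.mem_univ x
  · rintro ⟨hsq, hf⟩
    have h0 : 0 < n := by omega
    have hτ1 : τ ≠ 1 := fun h => hf ⟨0, h0⟩ (by rw [h]; rfl)
    have horder : orderOf τ = 2 := orderOf_eq_prime (by rwa [pow_two]) hτ1
    have hmem : ∀ x ∈ τ.cycleType, x = 2 := by
      intro x hx
      have h2 := Equiv.Perm.two_le_of_mem_cycleType hx
      have hdvd : x ∣ 2 := by
        rw [← horder, ← Equiv.Perm.lcm_cycleType]
        exact Multiset.dvd_lcm hx
      have := Nat.le_of_dvd (by norm_num) hdvd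
      omega
    have hrep := Multiset.eq_replicate_of_mem hmem
    have hsupp : τ.support = Finset.univ :=
      Finset.eq_univ_iff_forall.mpr (fun x => Equiv.Perm.mem_support.mpr (hf x))
    have hsum : τ.cycleType.sum = n := by
      rw [Equiv.Perm.sum_cycleType, hsupp, Finset.card_univ, Fintype.card_fin]
    have hcard : Multiset.card τ.cycleType = k := by
      rw [hrep, Multiset.sum_replicate, smul_eq_mul] at hsum
      omega
    rw [hrep, hcard]

lemma fullCycleType_filter {n : ℕ} (τ : Equiv.Perm (Fin n)) :
    (fullCycleType τ).filter (fun x => 2 ≤ x) = τ.cycleType := by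
  unfold fullCycleType
  rw [Multiset.filter_add,
    Multiset.filter_eq_self.mpr (fun a ha => Equiv.Perm.two_le_of_mem_cycleType ha),
    Multiset.filter_eq_nil.mpr (fun a ha => by
      simp [Multiset.eq_of_mem_replicate ha]), add_zero]

lemma fullCycleType_eq_iff {n : ℕ} (τ ρ : Equiv.Perm (Fin n)) :
    fullCycleType τ = fullCycleType ρ ↔ τ.cycleType = ρ.cycleType := by
  constructor
  · intro h
    rw [← fullCycleType_filter τ, ← fullCycleType_filter ρ, h]
  · intro h
    unfold fullCycleType
    rw [h]

lemma forced {n : ℕ} (σ : Equiv.Perm (Fin n))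
    (hP : ∀ i : Fin n, (i : ℕ) + 1 = (σ i : ℕ) ∨ (σ i : ℕ) + 1 = (i : ℕ)) :
    ∀ k : ℕ, ∀ h2k : 2 * k < n, ((σ ⟨2 * k, h2k⟩ : ℕ) = 2 * k + 1) ∧
      ∃ h' : 2 * k + 1 < n, (σ ⟨2 * k + 1, h'⟩ : ℕ) = 2 * k := by
  intro k
  induction k with
  | zero =>
    intro h0
    have hP0 := hP ⟨2 * 0, h0⟩
    simp only [Fin.val_mk] at hP0
    have hs0 : (σ ⟨2 * 0, h0⟩ : ℕ) = 2 * 0 + 1 := by omega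
    refine ⟨hs0, ?_⟩
    have h1 : 2 * 0 + 1 < n := by
      have := (σ ⟨2 * 0, h0⟩).isLt
      omega
    refine ⟨h1, ?_⟩
    set j := σ.symm ⟨2 * 0, h0⟩ with hjdef
    have hj : σ j = ⟨2 * 0, h0⟩ := σ.apply_symm_apply _
    have hPj := hP j
    rw [hj] at hPj
    simp only [Fin.val_mk] at hPj
    have hjval : (j : ℕ) = 2 * 0 + 1 := by omega
    have he : (⟨2 * 0 + 1, h1⟩ : Fin n) = j := Fin.ext (by simp only [Fin.val_mk]; omega)
    rw [he, hj]
  | succ k ih =>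
    intro h2k
    have hk' : 2 * k < n := by omega
    obtain ⟨ha, hb', hb⟩ := ih hk'
    have hPi := hP ⟨2 * (k + 1), h2k⟩
    simp only [Fin.val_mk] at hPi
    have hval : (σ ⟨2 * (k + 1), h2k⟩ : ℕ) = 2 * (k + 1) + 1 := by
      rcases hPi with h | h
      · omega
      · exfalso
        have heq : σ ⟨2 * (k + 1), h2k⟩ = σ ⟨2 * k, hk'⟩ := Fin.ext (by omega)
        have := congrArg Fin.val (σ.injective heq)
        simp only [Fin.val_mk] at this
        omega
    refine ⟨hval, ?_⟩
    have h3 : 2 * (k + 1) + 1 < n := by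
      have := (σ ⟨2 * (k + 1), h2k⟩).isLt
      omega
    refine ⟨h3, ?_⟩
    set j := σ.symm ⟨2 * (k + 1), h2k⟩ with hjdef
    have hj : σ j = ⟨2 * (k + 1), h2k⟩ := σ.apply_symm_apply _
    have hPj := hP j
    rw [hj] at hPj
    simp only [Fin.val_mk] at hPj
    have hjval : (j : ℕ) = 2 * (k + 1) + 1 := by
      rcases hPj with h | h
      · exfalso
        have he : j = ⟨2 * k + 1, hb'⟩ := Fin.ext (by simp only [Fin.val_mk]; omega)
        rw [← he, hj] at hb
        simp only [Fin.val_mk] at hb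
        omega
      · omega
    have he : (⟨2 * (k + 1) + 1, h3⟩ : Fin n) = j := Fin.ext hjval.symm
    rw [he, hj]

lemma even_of_forced {n : ℕ} (hn : 0 < n) (σ : Equiv.Perm (Fin n))
    (hP : ∀ i : Fin n, (i : ℕ) + 1 = (σ i : ℕ) ∨ (σ i : ℕ) + 1 = (i : ℕ)) :
    Even n := by
  by_contra hodd
  obtain ⟨m, hm⟩ := Nat.not_even_iff_odd.mp hodd
  have h2m : 2 * m < n := by omega
  obtain ⟨-, h', -⟩ := forced σ hP m h2m
  omega

/-- The `n × n` tridiagonal 0–1 Toeplitz matrix: `T i j = 1` iff `|i − j| = 1`. -/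
def triToeplitz (n : ℕ) : Matrix (Fin n) (Fin n) ℚ :=
  fun i j => if (i : ℕ) + 1 = (j : ℕ) ∨ (j : ℕ) + 1 = (i : ℕ) then 1 else 0

open Classical in
/-- For `n ≥ 3`, the quasi-immanant `QImm_Ψ^{S_{(2,1^{n-2})}}` of the tridiagonal 0–1
Toeplitz matrix, with coefficients `c_σ` given by the main theorem of the paper
(`k(σ)` the length of the cycle of `σ` containing the first point, `ℓ(σ)` the total
number of cycles counting fixed points, `N(σ)` the number of permutations with the same
cycle type as `σ`), equals `−(−1/2)^{n/2} n!/(n/2)!` when `n` is even and `0` when `n`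
is odd. -/
theorem quasiImmanant_triToeplitz (n : ℕ) (hn : 3 ≤ n) :
    ∑ σ : Equiv.Perm (Fin n),
        (if Nat.card {j : Fin n // ∃ m : ℕ, (σ ^ m) (⟨0, by omega⟩ : Fin n) = j} = 1 then
            (-1 : ℚ) ^ (n - Multiset.card (fullCycleType σ)) * (numSameCycleType σ : ℚ)
          else if Nat.card {j : Fin n // ∃ m : ℕ, (σ ^ m) (⟨0, by omega⟩ : Fin n) = j} = 2 then
            (-1 : ℚ) ^ (n - 1 - Multiset.card (fullCycleType σ)) * (numSameCycleType σ : ℚ)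
          else 0) *
          ∏ i : Fin n, triToeplitz n i (σ i) =
      if Even n then
        -(-(1 : ℚ) / 2) ^ (n / 2) * ((n.factorial : ℚ) / ((n / 2).factorial : ℚ))
      else 0 := by
  have hprod : ∀ σ : Equiv.Perm (Fin n), (∏ i : Fin n, triToeplitz n i (σ i)) =
      (if (∀ i : Fin n, (i : ℕ) + 1 = (σ i : ℕ) ∨ (σ i : ℕ) + 1 = (i : ℕ)) then (1 : ℚ)
        else 0) := by
    intro σ
    by_cases h : ∀ i : Fin n, (i : ℕ) + 1 = (σ i : ℕ) ∨ (σ i : ℕ) + 1 = (i : ℕ)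
    · rw [if_pos h]
      apply Finset.prod_eq_one
      intro i _
      simp only [triToeplitz]
      rw [if_pos (h i)]
    · rw [if_neg h]
      push_neg at h
      obtain ⟨i, hi1, hi2⟩ := h
      apply Finset.prod_eq_zero (Finset.mem_univ i)
      simp only [triToeplitz]
      rw [if_neg (by push_neg; exact ⟨hi1, hi2⟩)]
  by_cases hEven : Even n
  · rw [if_pos hEven]
    set k := n / 2 with hkdef
    obtain ⟨m, hm⟩ := hEven
    have hk : n = 2 * k := by omega
    have hk2 : 2 ≤ k := by omega
    -- construct σ₀
    have hstep : ∀ i : Fin n, Even (i : ℕ) → (i : ℕ) + 1 < n := by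
      intro i hi
      obtain ⟨a, ha⟩ := hi
      have := i.isLt
      omega
    set f : Fin n → Fin n := fun i =>
      if h : Even (i : ℕ) then ⟨(i : ℕ) + 1, hstep i h⟩
      else ⟨(i : ℕ) - 1, by have := i.isLt; omega⟩ with hfdef
    have hfval : ∀ i : Fin n,
        (f i : ℕ) = if Even (i : ℕ) then (i : ℕ) + 1 else (i : ℕ) - 1 := by
      intro i
      by_cases h : Even (i : ℕ)
      · simp [hfdef, h]
      · simp [hfdef, h]
    have hfinv : Function.Involutive f := by
      intro i
      apply Fin.ext
      rw [hfval, hfval]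
      by_cases h : Even (i : ℕ)
      · rw [if_pos h, if_neg (by simp [Nat.even_add_one, h])]
        omega
      · have hi0 : (i : ℕ) ≠ 0 := fun h0 => h (by simp [h0])
        obtain ⟨c, hc⟩ := Nat.not_even_iff_odd.mp h
        rw [if_neg h, if_pos ⟨c, by omega⟩]
        omega
    set σ₀ : Equiv.Perm (Fin n) := Function.Involutive.toPerm f hfinv with hσ₀def
    have hσ₀f : ∀ i, σ₀ i = f i := fun i => rfl
    have hσ₀app : ∀ i : Fin n,
        (σ₀ i : ℕ) = if Even (i : ℕ) then (i : ℕ) + 1 else (i : ℕ) - 1 := by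
      intro i; rw [hσ₀f, hfval]
    have hσ₀sq : σ₀ * σ₀ = 1 := by
      ext i
      rw [Equiv.Perm.mul_apply, Equiv.Perm.one_apply, hσ₀f, hσ₀f]
      exact congrArg Fin.val (hfinv i)
    have hσ₀fpf : ∀ x : Fin n, σ₀ x ≠ x := by
      intro x hx
      have hval := congrArg Fin.val hx
      rw [hσ₀app] at hval
      by_cases h : Even (x : ℕ)
      · rw [if_pos h] at hval; omega
      · have hx0 : (x : ℕ) ≠ 0 := fun h0 => h (by simp [h0])
        rw [if_neg h] at hval; omega
    have hPσ₀ : ∀ i : Fin n, (i : ℕ) + 1 = (σ₀ i : ℕ) ∨ (σ₀ i : ℕ) + 1 = (i : ℕ) := by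
      intro i
      rw [hσ₀app]
      by_cases h : Even (i : ℕ)
      · left; rw [if_pos h]
      · have hi0 : (i : ℕ) ≠ 0 := fun h0 => h (by simp [h0])
        right; rw [if_neg h]; omega
    have huniq : ∀ σ : Equiv.Perm (Fin n),
        (∀ i : Fin n, (i : ℕ) + 1 = (σ i : ℕ) ∨ (σ i : ℕ) + 1 = (i : ℕ)) → σ = σ₀ := by
      intro σ hPσ
      ext i
      rcases Nat.even_or_odd (i : ℕ) with ⟨c, hc⟩ | ⟨c, hc⟩
      · have hc2 : 2 * c < n := by have := i.isLt; omega
        have h1 := (forced σ hPσ c hc2).1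
        have h2 := (forced σ₀ hPσ₀ c hc2).1
        have he : i = ⟨2 * c, hc2⟩ := Fin.ext (by simp only [Fin.val_mk]; omega)
        rw [he, h1, h2]
      · obtain ⟨-, h', h1⟩ := forced σ hPσ c (by have := i.isLt; omega)
        obtain ⟨-, h'', h2⟩ := forced σ₀ hPσ₀ c (by have := i.isLt; omega)
        have he : i = ⟨2 * c + 1, h'⟩ := Fin.ext (by simp only [Fin.val_mk]; omega)
        rw [he, h1]
        rw [show (⟨2 * c + 1, h'⟩ : Fin n) = ⟨2 * c + 1, h''⟩ from rfl, h2]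
    -- cycle type facts
    have hσ₀ct : σ₀.cycleType = Multiset.replicate k 2 :=
      (cycleType_eq_iff hk (by omega) σ₀).mpr ⟨hσ₀sq, hσ₀fpf⟩
    have hσ₀sum : σ₀.cycleType.sum = n := by
      rw [hσ₀ct, Multiset.sum_replicate, smul_eq_mul]; omega
    have hσ₀full : fullCycleType σ₀ = Multiset.replicate k 2 := by
      unfold fullCycleType
      rw [hσ₀sum, hσ₀ct]
      simp
    have hσ₀fullcard : Multiset.card (fullCycleType σ₀) = k := by
      rw [hσ₀full, Multiset.card_replicate]
    have hnum : numSameCycleType σ₀ = (fpf (Fin n)).card := by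
      have hfe : (Finset.univ.filter
          (fun τ : Equiv.Perm (Fin n) => fullCycleType τ = fullCycleType σ₀))
          = fpf (Fin n) := by
        ext τ
        simp only [Finset.mem_filter, Finset.mem_univ, true_and]
        rw [mem_fpf, fullCycleType_eq_iff, hσ₀ct]
        exact cycleType_eq_iff hk (by omega) τ
      unfold numSameCycleType
      rw [hfe]
    have hN : (fpf (Fin n)).card * (2 ^ k * k.factorial) = n.factorial := by
      have := fpf_card k (Fin n) (by rw [Fintype.card_fin]; omega)
      rwa [← hk] at this
    -- orbit of 0 under σ₀ has size 2
    have horb : ∀ h0 : 0 < n,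
        Nat.card {j : Fin n // ∃ m : ℕ, (σ₀ ^ m) (⟨0, h0⟩ : Fin n) = j} = 2 := by
      intro h0
      set z : Fin n := ⟨0, h0⟩ with hzdef
      set w : Fin n := σ₀ z with hwdef
      have hwval : (w : ℕ) = 1 := by
        rw [hwdef, hσ₀app, if_pos (by simp [hzdef])]
      have hzw : z ≠ w := by
        intro h
        have := congrArg Fin.val h
        rw [hwval] at this
        simp [hzdef] at this
      have hsq2 : σ₀ ^ 2 = 1 := by rw [pow_two, hσ₀sq]
      have hpow : ∀ m : ℕ, (σ₀ ^ m) z = z ∨ (σ₀ ^ m) z = w := by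
        intro m
        rcases Nat.even_or_odd m with ⟨c, hc⟩ | ⟨c, hc⟩
        · left
          rw [show m = 2 * c from by omega, pow_mul, hsq2, one_pow, Equiv.Perm.one_apply]
        · right
          rw [show m = 2 * c + 1 from by omega, pow_succ, pow_mul, hsq2, one_pow,
            one_mul, hwdef]
      have hset : {j : Fin n | ∃ m : ℕ, (σ₀ ^ m) z = j} = {z, w} := by
        ext j
        simp only [Set.mem_setOf_eq, Set.mem_insert_iff, Set.mem_singleton_iff]
        constructor
        · rintro ⟨m, rfl⟩
          rcases hpow m with h | h
          · exact Or.inl h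
          · exact Or.inr h
        · rintro (rfl | rfl)
          · exact ⟨0, rfl⟩
          · exact ⟨1, by rw [pow_one, hwdef]⟩
      calc Nat.card {j : Fin n // ∃ m : ℕ, (σ₀ ^ m) z = j}
          = Nat.card ({z, w} : Set (Fin n)) := Nat.card_congr (Equiv.setCongr hset)
        _ = 2 := by rw [Nat.card_coe_set_eq, Set.ncard_pair hzw]
    -- collapse the sum to the single term σ₀
    rw [Finset.sum_eq_single σ₀]
    · rw [hprod σ₀, if_pos hPσ₀, mul_one, horb (by omega), hσ₀fullcard, hnum]
      rw [if_neg (by norm_num), if_pos rfl]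
      -- final arithmetic
      have hfk : (k.factorial : ℚ) ≠ 0 := Nat.cast_ne_zero.mpr k.factorial_ne_zero
      have h2k : ((2 : ℚ) ^ k) ≠ 0 := pow_ne_zero _ (by norm_num)
      have hNQ : ((fpf (Fin n)).card : ℚ) * (2 ^ k * k.factorial) = n.factorial := by
        exact_mod_cast congrArg (Nat.cast : ℕ → ℚ) hN
      have hexp : n - 1 - k = k - 1 := by omega
      have hneg : (-1 : ℚ) ^ k = -(-1 : ℚ) ^ (k - 1) := by
        conv_lhs => rw [show k = (k - 1) + 1 from by omega]
        rw [pow_succ]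
        ring
      rw [hexp, div_pow, hneg]
      field_simp
      linear_combination hNQ
    · intro σ _ hσ
      rw [hprod σ]
      rw [if_neg (fun hPσ => hσ (huniq σ hPσ)), mul_zero]
    · intro habs
      exact absurd (Finset.mem_univ σ₀) habs
  · rw [if_neg hEven]
    apply Finset.sum_eq_zero
    intro σ _
    rw [hprod σ]
    by_cases hσ : ∀ i : Fin n, (i : ℕ) + 1 = (σ i : ℕ) ∨ (σ i : ℕ) + 1 = (i : ℕ)
    · exact absurd (even_of_forced (by omega) σ hσ) hEven
    · rw [if_neg hσ, mul_zero]
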